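/- Let μ be a partition of l, let R_μ be the set of roots defined via the reading order of the boxes of μ, and let B_μ be the set of positive roots α_{ij} of GL_l with i, j in distinct blocks of the set partition of {1,…,l} into consecutive intervals of sizes μ_{ℓ(μ)},…,μ_1. Then R_μ ⊆ B_μ. -/

import Mathlib

/-- Reading order on boxes `(i, j)`. -/
def readLT (c d : ℕ × ℕ) : Prop := d.2 < c.2 ∨ (c.2 = d.2 ∧ c.1 < d.1)

instance : DecidableRel readLT := fun c d => by unfold readLT; infer_instance

def south (c : ℕ × ℕ) : ℕ × ℕ := (c.1, c.2 - 1)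

/-- Let `μ` be a partition of `l` with `L` parts, with boxes listed in reading
order by `b`.  Let `B_μ` be the set of pairs `(a, a')`, `a < a'`, lying in
distinct blocks of the partition of the `l` positions into consecutive intervals
of sizes `μ_L, …, μ_1` (block membership measured by the function `blk`, which
counts the tail sums `μ_r + ⋯ + μ_L` that are `≤` the position).  Then
`R_μ ⊆ B_μ`. -/
theorem stmt10 (l L : ℕ) (μ : ℕ → ℕ)
    (hμ : ∀ j, 1 ≤ j → μ (j + 1) ≤ μ j)
    (hL0 : ∀ j, L < j → μ j = 0)
    (hLpos : ∀ j, 1 ≤ j → j ≤ L → 1 ≤ μ j)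
    (cells : Finset (ℕ × ℕ))
    (hcells : ∀ c, c ∈ cells ↔ 1 ≤ c.2 ∧ 1 ≤ c.1 ∧ c.1 ≤ μ c.2)
    (hl : cells.card = l)
    (b : Fin l → ℕ × ℕ)
    (hb1 : ∀ a, b a ∈ cells)
    (hb2 : ∀ c ∈ cells, ∃ a, b a = c)
    (hb3 : ∀ a a' : Fin l, a < a' → readLT (b a) (b a')) :
    letI blk : Fin l → ℕ := fun a =>
      ((Finset.Icc 1 L).filter fun r => (∑ s ∈ Finset.Icc r L, μ s) ≤ (a : ℕ)).card
    letI Rmu : Finset (Fin l × Fin l) :=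
      Finset.univ.filter fun p => p.1 < p.2 ∧ south (b p.1) ∈ cells ∧
        (readLT (south (b p.1)) (b p.2) ∨ south (b p.1) = b p.2)
    letI Bmu : Finset (Fin l × Fin l) :=
      Finset.univ.filter fun p => p.1 < p.2 ∧ blk p.1 ≠ blk p.2
    Rmu ⊆ Bmu := by
  intro p hp
  have hirr : ∀ c : ℕ × ℕ, ¬ readLT c c := by intro c h; unfold readLT at h; omega
  have hasym : ∀ c d : ℕ × ℕ, readLT c d → readLT d c → False := by
    intro c d h1 h2; unfold readLT at h1 h2; omega
  have hinj : Function.Injective b := by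
    intro a a' h
    by_contra hne
    rcases Ne.lt_or_gt hne with h' | h'
    · have := hb3 a a' h'; rw [h] at this; exact hirr _ this
    · have := hb3 a' a h'; rw [h] at this; exact hirr _ this
  have hTanti : ∀ r r' : ℕ, r ≤ r' →
      (∑ s ∈ Finset.Icc r' L, μ s) ≤ ∑ s ∈ Finset.Icc r L, μ s := by
    intro r r' h
    exact Finset.sum_le_sum_of_subset (Finset.Icc_subset_Icc_left h)
  -- counting cells before a given cell in reading order
  have hcount : ∀ i j : ℕ, (i, j) ∈ cells →
      (cells.filter fun c => readLT c (i, j)).card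
        = (∑ s ∈ Finset.Icc (j + 1) L, μ s) + (i - 1) := by
    intro i j hij
    obtain ⟨hj1, hi1, hiμ⟩ := (hcells (i, j)).1 hij
    replace hj1 : 1 ≤ j := hj1
    replace hi1 : 1 ≤ i := hi1
    replace hiμ : i ≤ μ j := hiμ
    have hfe : cells.filter (fun c => readLT c (i, j))
        = ((Finset.Icc (j + 1) L).biUnion fun s =>
            (Finset.Icc 1 (μ s)).image fun t => (t, s))
          ∪ (Finset.Icc 1 (i - 1)).image fun t => (t, j) := by
      ext ⟨t, s⟩
      rw [Finset.mem_filter]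
      simp only [Finset.mem_filter, Finset.mem_union, Finset.mem_biUnion, Finset.mem_image,
        Finset.mem_Icc, hcells, readLT, Prod.mk.injEq]
      constructor
      · rintro ⟨⟨hs, ht, htμ⟩, h | ⟨rfl, hti⟩⟩
        · left
          refine ⟨s, ⟨by omega, ?_⟩, t, ⟨ht, htμ⟩, rfl, rfl⟩
          by_contra hsl
          have := hL0 s (by omega)
          omega
        · right; exact ⟨t, ⟨ht, by omega⟩, rfl, rfl⟩
      · rintro (⟨s', ⟨hs1, hs2⟩, t', ⟨ht1, ht2⟩, rfl, rfl⟩ | ⟨t', ⟨ht1, ht2⟩, rfl, rfl⟩)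
        · exact ⟨⟨by omega, ht1, ht2⟩, by omega⟩
        · exact ⟨⟨hj1, ht1, by omega⟩, by omega⟩
    have hdisj : Disjoint
        ((Finset.Icc (j + 1) L).biUnion fun s => (Finset.Icc 1 (μ s)).image fun t => (t, s))
        ((Finset.Icc 1 (i - 1)).image fun t => (t, j)) := by
      rw [Finset.disjoint_left]
      rintro ⟨t, s⟩ h1 h2
      simp only [Finset.mem_biUnion, Finset.mem_image, Finset.mem_Icc, Prod.mk.injEq] at h1 h2
      obtain ⟨s', ⟨hs1, hs2⟩, t', ht', rfl, rfl⟩ := h1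
      obtain ⟨t'', ht'', rfl, rfl⟩ := h2
      omega
    rw [hfe, Finset.card_union_of_disjoint hdisj]
    have h1 : ((Finset.Icc (j + 1) L).biUnion fun s =>
        (Finset.Icc 1 (μ s)).image fun t => (t, s)).card = ∑ s ∈ Finset.Icc (j + 1) L, μ s := by
      rw [Finset.card_biUnion]
      · refine Finset.sum_congr rfl fun s _ => ?_
        rw [Finset.card_image_of_injective _ (fun a b h => by simpa using congrArg Prod.fst h)]
        simp [Nat.card_Icc]
      · intro x hx y hy hxy
        rw [Function.onFun, Finset.disjoint_left]
        rintro ⟨t, s⟩ h1 h2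
        simp only [Finset.mem_image, Finset.mem_Icc, Prod.mk.injEq] at h1 h2
        obtain ⟨t', ht', rfl, rfl⟩ := h1
        obtain ⟨t'', ht'', rfl, rfl⟩ := h2
        exact hxy rfl
    have h2 : ((Finset.Icc 1 (i - 1)).image fun t => (t, j)).card = i - 1 := by
      rw [Finset.card_image_of_injective _ (fun a b h => by simpa using congrArg Prod.fst h)]
      simp [Nat.card_Icc]
    omega
  -- position of a cell in reading order
  have hpos : ∀ a : Fin l, (cells.filter fun c => readLT c (b a)).card = (a : ℕ) := by
    intro a
    have hfe : cells.filter (fun c => readLT c (b a)) = (Finset.Iio a).image b := by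
      ext c
      simp only [Finset.mem_filter, Finset.mem_image, Finset.mem_Iio]
      constructor
      · rintro ⟨hc, hr⟩
        obtain ⟨a', rfl⟩ := hb2 c hc
        refine ⟨a', ?_, rfl⟩
        rcases lt_trichotomy a' a with h | h | h
        · exact h
        · subst h; exact absurd hr (hirr _)
        · exact absurd hr fun hr => hasym _ _ hr (hb3 a a' h)
      · rintro ⟨a', h, rfl⟩
        exact ⟨hb1 a', hb3 a' a h⟩
    rw [hfe, Finset.card_image_of_injective _ hinj, Fin.card_Iio]
  -- block formula
  have hkey : ∀ a : Fin l, 1 ≤ (b a).2 ∧ (b a).2 ≤ L ∧ ((Finset.Icc 1 L).filter fun r => (∑ s ∈ Finset.Icc r L, μ s) ≤ (a : ℕ)).card = L - (b a).2 := by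
    intro a
    obtain ⟨hj1, hi1, hiμ⟩ := (hcells (b a)).1 (hb1 a)
    have hba : b a = ((b a).1, (b a).2) := rfl
    set i := (b a).1 with hidef
    set j := (b a).2 with hjdef
    have hjL : j ≤ L := by
      by_contra h
      have := hL0 j (by omega)
      omega
    have ha : (a : ℕ) = (∑ s ∈ Finset.Icc (j + 1) L, μ s) + (i - 1) := by
      rw [← hpos a, hba, hcount i j (hba ▸ hb1 a)]
    have hstep : (∑ s ∈ Finset.Icc j L, μ s) = μ j + ∑ s ∈ Finset.Icc (j + 1) L, μ s := by
      rw [Finset.Icc_eq_cons_Ioc hjL, Finset.sum_cons, Finset.Icc_add_one_left_eq_Ioc]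
    have hlow : (∑ s ∈ Finset.Icc (j + 1) L, μ s) ≤ (a : ℕ) := by omega
    have hhigh : (a : ℕ) < ∑ s ∈ Finset.Icc j L, μ s := by omega
    refine ⟨hj1, hjL, ?_⟩
    have hfe : (Finset.Icc 1 L).filter (fun r => (∑ s ∈ Finset.Icc r L, μ s) ≤ (a : ℕ))
        = Finset.Icc (j + 1) L := by
      ext r
      simp only [Finset.mem_filter, Finset.mem_Icc]
      constructor
      · rintro ⟨⟨hr1, hrL⟩, hrT⟩
        refine ⟨?_, hrL⟩
        by_contra h
        have := hTanti r j (by omega)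
        omega
      · rintro ⟨hr1, hrL⟩
        exact ⟨⟨by omega, hrL⟩, le_trans (hTanti (j + 1) r hr1) hlow⟩
    rw [hfe, Nat.card_Icc]
    omega
  -- main argument
  obtain ⟨-, hlt, hsc, hr⟩ := Finset.mem_filter.mp hp
  refine Finset.mem_filter.mpr ⟨Finset.mem_univ _, hlt, ?_⟩
  show ((Finset.Icc 1 L).filter fun r => (∑ s ∈ Finset.Icc r L, μ s) ≤ ((p.1 : ℕ))).card
      ≠ ((Finset.Icc 1 L).filter fun r => (∑ s ∈ Finset.Icc r L, μ s) ≤ ((p.2 : ℕ))).card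
  intro heq
  obtain ⟨h11, h12, h13⟩ := hkey p.1
  obtain ⟨h21, h22, h23⟩ := hkey p.2
  rw [h13, h23] at heq
  have hjj : (b p.1).2 = (b p.2).2 := by omega
  rcases hr with hr | hr
  · unfold readLT south at hr
    simp only at hr
    omega
  · have := congrArg Prod.snd hr
    unfold south at this
    simp only at this
    omega
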